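/- For a cyclic transaction through a cycle with n+1 pools, the right derivative of the utility function U at δ = 0 equals (r₁·r₂)^{n+1}·I − 1, where I is the arbitrage index of the cycle; that is, ∂U/∂δ |_{δ=0} = r₁^{n+1}·r₂^{n+1}·(a_{n+1}·b¹₁·b²₂·…·bⁿₙ)/(a₁·b¹₂·b²₃·…·bⁿ_{n+1}) − 1. -/

import Mathlib

/-- Constant-product AMM swap: output of swapping input `δ` through a pool with
input-side reserve `a`, output-side reserve `b` and fee parameters `r1, r2`. -/
noncomputable def swap (r1 r2 a b δ : ℝ) : ℝ := r1 * r2 * b * δ / (a + r1 * δ)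

/-- Output of feeding an input through a sequence of pools; each pool is a pair
`(input-side reserve, output-side reserve)` along the direction of trade. -/
noncomputable def cyclicOut (r1 r2 : ℝ) : List (ℝ × ℝ) → ℝ → ℝ
  | [], δ => δ
  | p :: ps, δ => cyclicOut r1 r2 ps (swap r1 r2 p.1 p.2 δ)

/-- Arbitrage index of a cycle of pools: product of output-side reserves divided
by product of input-side reserves. -/
noncomputable def arbIndex (ps : List (ℝ × ℝ)) : ℝ :=
  (ps.map Prod.snd).prod / (ps.map Prod.fst).prod

/-- The reversed cycle: the same pools in opposite order with the roles of the
two reserves of each pool interchanged. -/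
def revPools (ps : List (ℝ × ℝ)) : List (ℝ × ℝ) := (ps.map Prod.swap).reverse

/-- The updated pools after executing a cyclic transaction with input `δ`:
each pool's input-side reserve increases by the amount swapped in and its
output-side reserve decreases by the amount swapped out. -/
noncomputable def execPools (r1 r2 : ℝ) : List (ℝ × ℝ) → ℝ → List (ℝ × ℝ)
  | [], _ => []
  | p :: ps, δ =>
      (p.1 + δ, p.2 - swap r1 r2 p.1 p.2 δ) :: execPools r1 r2 ps (swap r1 r2 p.1 p.2 δ)

lemma swap_zero (r1 r2 a b : ℝ) : swap r1 r2 a b 0 = 0 := by simp [swap]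

lemma swap_hasDerivAt (r1 r2 a b : ℝ) (ha : 0 < a) :
    HasDerivAt (swap r1 r2 a b) (r1 * r2 * b / a) 0 := by
  have hnum : HasDerivAt (fun δ : ℝ => r1 * r2 * b * δ) (r1 * r2 * b) 0 := by
    simpa using (hasDerivAt_id (0:ℝ)).const_mul (r1 * r2 * b)
  have hden : HasDerivAt (fun δ : ℝ => a + r1 * δ) r1 0 := by
    simpa using ((hasDerivAt_id (0:ℝ)).const_mul r1).const_add a
  have h := hnum.div hden (by simpa using ha.ne')
  convert h using 1
  · rfl
  · rfl
  · rfl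
  field_simp [ha.ne']
  ring

lemma cyclicOut_key (r1 r2 : ℝ) (ps : List (ℝ × ℝ))
    (hpos : ∀ p ∈ ps, 0 < p.1 ∧ 0 < p.2) :
    cyclicOut r1 r2 ps 0 = 0 ∧
    HasDerivAt (cyclicOut r1 r2 ps)
      (r1 ^ ps.length * r2 ^ ps.length * arbIndex ps) 0 := by
  induction ps with
  | nil =>
    refine ⟨rfl, ?_⟩
    simp [cyclicOut, arbIndex]
    exact hasDerivAt_id (0:ℝ)
  | cons p ps ih =>
    have hp := hpos p (List.mem_cons_self)
    have hps : ∀ q ∈ ps, 0 < q.1 ∧ 0 < q.2 := fun q hq => hpos q (List.mem_cons_of_mem _ hq)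
    obtain ⟨hz, hd⟩ := ih hps
    constructor
    · simp [cyclicOut, swap_zero, hz]
    · have hswap := swap_hasDerivAt r1 r2 p.1 p.2 hp.1
      have hd' : HasDerivAt (cyclicOut r1 r2 ps)
          (r1 ^ ps.length * r2 ^ ps.length * arbIndex ps) (swap r1 r2 p.1 p.2 0) := by
        rwa [swap_zero]
      have hcomp := hd'.comp 0 hswap
      have : (fun δ => cyclicOut r1 r2 ps (swap r1 r2 p.1 p.2 δ)) =
          cyclicOut r1 r2 (p :: ps) := rfl
      rw [Function.comp_def, this] at hcomp
      convert hcomp using 1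
      · rfl
      · rfl
      have hprod : (ps.map Prod.fst).prod ≠ 0 := by
        refine (List.prod_pos ?_).ne'
        intro x hx
        obtain ⟨q, hq, rfl⟩ := List.mem_map.mp hx
        exact (hps q hq).1
      simp only [arbIndex, List.map_cons, List.prod_cons, List.length_cons, pow_succ]
      field_simp

/-- the right derivative at 0 of the utility of a cyclic
transaction through a cycle of length n+1 equals (r1*r2)^(n+1) times the
arbitrage index of the cycle, minus 1. -/
theorem utility_right_deriv_at_zero
    (n : ℕ) (ps : List (ℝ × ℝ)) (hlen : ps.length = n + 1)
    (hpos : ∀ p ∈ ps, 0 < p.1 ∧ 0 < p.2)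
    (r1 r2 : ℝ) (hr1 : 0 < r1) (hr1' : r1 ≤ 1) (hr2 : 0 < r2) (hr2' : r2 ≤ 1) :
    HasDerivWithinAt (fun δ : ℝ => cyclicOut r1 r2 ps δ - δ)
      (r1 ^ (n + 1) * r2 ^ (n + 1) * arbIndex ps - 1) (Set.Ici 0) 0 := by
  obtain ⟨-, hd⟩ := cyclicOut_key r1 r2 ps hpos
  rw [hlen] at hd
  exact ((hd.sub (hasDerivAt_id 0)).hasDerivWithinAt)
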